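/- arXiv:0707.3708 — 5 statements merged into one kernel-verified Lean document; each statement's English description precedes it below -/
import Mathlib

section
/- Let G ⊆ ℝⁿ be open and convex, let η : G → ℝ be differentiable and strictly convex, let L : G → Matₙ(ℝ) assign to each U a symmetric positive semidefinite matrix whose kernel is a fixed subspace N ⊆ ℝⁿ independent of U, and set Q(U) = −L(U)·∇η(U). Then for every U ∈ G there is at most one point M ∈ G such that Q(M) = 0 and U − M lies in the orthogonal complement N^⊥ of N. -/
open Matrix

/-- The gradient (as a column vector) of a function on `ℝⁿ`. -/
noncomputable def grad {n : ℕ} (η : (Fin n → ℝ) → ℝ) (U : Fin n → ℝ) : Fin n → ℝ :=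
  fun i => fderiv ℝ η U (Pi.single i 1)

lemma fderiv_eq_dot {n : ℕ} (η : (Fin n → ℝ) → ℝ) (x v : Fin n → ℝ) :
    fderiv ℝ η x v = grad η x ⬝ᵥ v := by
  have hv : v = ∑ i, v i • (Pi.single i (1 : ℝ) : Fin n → ℝ) := by
    funext j
    simp [Finset.sum_apply, Pi.single_apply, Finset.sum_ite_eq', mul_comm]
  conv_lhs => rw [hv]
  rw [map_sum]
  simp [grad, dotProduct, mul_comm]

/-- Uniqueness part of Theorem 2.3: for each `U ∈ G` there is at most one
equilibrium point `M` with `U - M` orthogonal (w.r.t. the Euclidean inner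
product) to the common null space `N` of the matrices `L(U)`. -/
theorem stmt2 {n : ℕ} (G : Set (Fin n → ℝ)) (hGo : IsOpen G) (hGc : Convex ℝ G)
    (η : (Fin n → ℝ) → ℝ) (hηd : ∀ U ∈ G, DifferentiableAt ℝ η U)
    (hηc : StrictConvexOn ℝ G η)
    (L : (Fin n → ℝ) → Matrix (Fin n) (Fin n) ℝ)
    (hL : ∀ U ∈ G, (L U).PosSemidef)
    (N : Submodule ℝ (Fin n → ℝ))
    (hker : ∀ U ∈ G, LinearMap.ker (Matrix.toLin' (L U)) = N)
    (Q : (Fin n → ℝ) → (Fin n → ℝ))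
    (hQ : ∀ U ∈ G, Q U = -(L U).mulVec (grad η U)) :
    ∀ U ∈ G, ∀ M₁ ∈ G, ∀ M₂ ∈ G,
      Q M₁ = 0 → (∀ y ∈ N, (U - M₁) ⬝ᵥ y = 0) →
      Q M₂ = 0 → (∀ y ∈ N, (U - M₂) ⬝ᵥ y = 0) →
      M₁ = M₂ := by
  intro U hU M₁ hM₁ M₂ hM₂ hQ1 horth1 hQ2 horth2
  by_contra hne
  -- gradients lie in N
  have hgrad : ∀ M ∈ G, Q M = 0 → grad η M ∈ N := by
    intro M hM hQM
    rw [← hker M hM, LinearMap.mem_ker, Matrix.toLin'_apply]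
    have h := hQ M hM
    rw [hQM] at h
    exact neg_eq_zero.mp h.symm
  have hg1 : grad η M₁ ∈ N := hgrad M₁ hM₁ hQ1
  have hg2 : grad η M₂ ∈ N := hgrad M₂ hM₂ hQ2
  set v : Fin n → ℝ := M₂ - M₁ with hv
  have hvne : v ≠ 0 := sub_ne_zero.mpr (Ne.symm hne)
  -- v is orthogonal to N
  have hvorth : ∀ y ∈ N, v ⬝ᵥ y = 0 := by
    intro y hy
    have h1 := horth1 y hy
    have h2 := horth2 y hy
    have : (M₂ - M₁) ⬝ᵥ y = (U - M₁) ⬝ᵥ y - (U - M₂) ⬝ᵥ y := by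
      rw [← sub_dotProduct]; congr 1; abel
    rw [hv, this, h1, h2, sub_zero]
  -- directional derivatives vanish at M₁ and M₂
  have hd1 : fderiv ℝ η M₁ v = 0 := by
    rw [fderiv_eq_dot, dotProduct_comm]
    exact hvorth _ hg1
  have hd2 : fderiv ℝ η M₂ v = 0 := by
    rw [fderiv_eq_dot, dotProduct_comm]
    exact hvorth _ hg2
  -- the line
  set c : ℝ → (Fin n → ℝ) := fun t => M₁ + t • v with hc
  have hmem : ∀ t ∈ Set.Icc (0:ℝ) 1, c t ∈ G := by
    intro t ht
    have : c t = (1 - t) • M₁ + t • M₂ := by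
      funext i; simp [hc, hv]; ring
    rw [this]
    exact hGc hM₁ hM₂ (by linarith [ht.2]) ht.1 (by ring)
  have hcinj : ∀ s t : ℝ, c s = c t → s = t := by
    intro s t hst
    by_contra hstne
    apply hvne
    have : (s - t) • v = 0 := by
      have := sub_eq_zero.mpr hst
      simpa [hc, sub_smul, add_sub_add_left_eq_sub] using this
    rcases smul_eq_zero.mp this with h | h
    · exact absurd (sub_eq_zero.mp h) hstne
    · exact h
  -- g strictly convex on Icc 0 1
  set g : ℝ → ℝ := fun t => η (c t) with hgdef
  have hgc : StrictConvexOn ℝ (Set.Icc (0:ℝ) 1) g := by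
    constructor
    · exact convex_Icc 0 1
    · intro a ha b hb hab p q hp hq hpq
      have hca : c a ∈ G := hmem a ha
      have hcb : c b ∈ G := hmem b hb
      have hcab : c a ≠ c b := fun h => hab (hcinj a b h)
      have key := hηc.2 hca hcb hcab hp hq hpq
      have hkey2 : c (p * a + q * b) = p • c a + q • c b := by
        funext i
        simp only [hc, Pi.add_apply, Pi.smul_apply, smul_eq_mul]
        linear_combination (M₁ i) * hpq.symm
      calc g (p • a + q • b) = η (c (p * a + q * b)) := by simp [hgdef, smul_eq_mul]
        _ = η (p • c a + q • c b) := by rw [hkey2]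
        _ < p * η (c a) + q * η (c b) := key
        _ = p • g a + q • g b := by simp [hgdef, smul_eq_mul]
  -- derivative of g at t
  have hderiv : ∀ t : ℝ, c t ∈ G → HasDerivAt g (fderiv ℝ η (c t) v) t := by
    intro t hct
    have hline : HasDerivAt c v t := by
      have : HasDerivAt (fun s : ℝ => s • v) ((1:ℝ) • v) t :=
        (hasDerivAt_id t).smul_const v
      simpa [hc] using this.const_add M₁
    exact ((hηd _ hct).hasFDerivAt.comp_hasDerivAt t hline)
  have h0 : HasDerivAt g 0 0 := by
    have := hderiv 0 (by simpa [hc] using hM₁)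
    simpa [hc, hd1] using this
  have h1 : HasDerivAt g 0 1 := by
    have hc1 : c 1 = M₂ := by funext i; simp [hc, hv]
    have := hderiv 1 (by rw [hc1]; exact hM₂)
    rw [hc1, hd2] at this
    exact this
  have lt1 := hgc.lt_slope_of_hasDerivAt (y := 1) (by norm_num) (by norm_num) (by norm_num) h0
  have lt2 := hgc.slope_lt_of_hasDerivAt (x := 0) (by norm_num) (by norm_num) (by norm_num) h1
  linarith
end

section
/- Let G ⊆ ℝⁿ be open and convex, let η : G → ℝ be twice continuously differentiable with positive-definite Hessian, let L : G → Matₙ(ℝ) assign to each U a symmetric positive semidefinite matrix whose kernel is a fixed subspace N ⊆ ℝⁿ, and set Q(U) = −L(U)·∇η(U). Let D ⊆ G and let M : D → G satisfy Q(M(U)) = 0 and U − M(U) ∈ N^⊥ for all U ∈ D. Then there exist functions c, C : D → ℝ with 0 < c(U) ≤ C(U) for every U ∈ D such that c(U)·‖U − M(U)‖ ≤ ‖Q(U)‖ ≤ C(U)·‖U − M(U)‖ for every U ∈ D; in particular, Q(U) = 0 if and only if U = M(U). -/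
open Matrix

/-- The Hessian matrix of a function on `ℝⁿ`. -/
noncomputable def hess {n : ℕ} (η : (Fin n → ℝ) → ℝ) (U : Fin n → ℝ) :
    Matrix (Fin n) (Fin n) ℝ :=
  Matrix.of fun i j => fderiv ℝ (fun V => fderiv ℝ η V (Pi.single j 1)) U (Pi.single i 1)

/-- The Euclidean norm on `ℝⁿ`. -/
noncomputable def euclNorm {n : ℕ} (x : Fin n → ℝ) : ℝ :=
  Real.sqrt (∑ i, x i ^ 2)

lemma euclNorm_pos {n : ℕ} {x : Fin n → ℝ} (hx : x ≠ 0) : 0 < euclNorm x := by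
  apply Real.sqrt_pos.2
  have : ∃ i, x i ≠ 0 := by
    by_contra h
    push_neg at h
    exact hx (funext h)
  obtain ⟨i, hi⟩ := this
  exact Finset.sum_pos' (fun j _ => sq_nonneg _) ⟨i, Finset.mem_univ i, by positivity⟩

-- expansion of a vector
lemma vec_expand {n : ℕ} (v : Fin n → ℝ) :
    v = ∑ i, v i • (Pi.single i 1 : Fin n → ℝ) := by
  ext j
  simp [Pi.single_apply, Finset.sum_apply]

-- fderiv applied to v in terms of grad
lemma fderiv_apply_eq_dot {n : ℕ} (η : (Fin n → ℝ) → ℝ) (x v : Fin n → ℝ) :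
    fderiv ℝ η x v = ∑ i, v i * grad η x i := by
  conv_lhs => rw [vec_expand v]
  rw [map_sum]
  simp [grad]

-- core: second derivative along line equals quadratic form of hess
lemma fderiv_fderiv_eq {n : ℕ} (η : (Fin n → ℝ) → ℝ) (x : Fin n → ℝ)
    (hdiff : DifferentiableAt ℝ (fun y => fderiv ℝ η y) x) (v : Fin n → ℝ) :
    (fderiv ℝ (fun y => fderiv ℝ η y) x v) v = v ⬝ᵥ (hess η x).mulVec v := by
  set B := fderiv ℝ (fun y => fderiv ℝ η y) x
  have hij : ∀ i j, hess η x i j = B (Pi.single i 1) (Pi.single j 1) := by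
    intro i j
    have h1 : HasFDerivAt (fun V => fderiv ℝ η V (Pi.single j 1))
        ((ContinuousLinearMap.apply ℝ ℝ (Pi.single j 1 : Fin n → ℝ)).comp B) x :=
      (ContinuousLinearMap.apply ℝ ℝ (Pi.single j 1 : Fin n → ℝ)).hasFDerivAt.comp x
        hdiff.hasFDerivAt
    simp [hess, h1.fderiv]
  have inner_exp : ∀ i, B (Pi.single i 1) v = ∑ j, v j * B (Pi.single i 1) (Pi.single j 1) := by
    intro i
    calc B (Pi.single i 1) v = B (Pi.single i 1) (∑ j, v j • (Pi.single j 1 : Fin n → ℝ)) := by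
          rw [← vec_expand]
      _ = ∑ j, v j * B (Pi.single i 1) (Pi.single j 1) := by
          rw [map_sum]; simp
  have hBvv : B v v = ∑ i, ∑ j, v i * (v j * B (Pi.single i 1) (Pi.single j 1)) := by
    calc B v v = B (∑ i, v i • (Pi.single i 1 : Fin n → ℝ)) v := by rw [← vec_expand]
      _ = ∑ i, v i * B (Pi.single i 1) v := by
          rw [map_sum]; simp [Finset.sum_apply]
      _ = ∑ i, ∑ j, v i * (v j * B (Pi.single i 1) (Pi.single j 1)) := by
          refine Finset.sum_congr rfl fun i _ => ?_
          rw [inner_exp i, Finset.mul_sum]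
  rw [hBvv]
  simp only [dotProduct, mulVec, hij]
  rw [Finset.sum_congr rfl]
  intro i _
  simp [Finset.mul_sum, dotProduct]
  ring_nf
  exact Finset.sum_congr rfl fun j _ => by ring

/-- The two-sided bound (2.4) of Theorem 2.3:
`c(U)‖U - M(U)‖ ≤ ‖Q(U)‖ ≤ C(U)‖U - M(U)‖`; in particular `Q(U) = 0 ↔ U = M(U)`. -/
theorem stmt3 {n : ℕ} (G : Set (Fin n → ℝ)) (hGo : IsOpen G) (hGc : Convex ℝ G)
    (η : (Fin n → ℝ) → ℝ) (hη : ContDiffOn ℝ 2 η G)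
    (hηpos : ∀ U ∈ G, (hess η U).PosDef)
    (L : (Fin n → ℝ) → Matrix (Fin n) (Fin n) ℝ)
    (hL : ∀ U ∈ G, (L U).PosSemidef)
    (N : Submodule ℝ (Fin n → ℝ))
    (hker : ∀ U ∈ G, LinearMap.ker (Matrix.toLin' (L U)) = N)
    (Q : (Fin n → ℝ) → (Fin n → ℝ))
    (hQ : ∀ U ∈ G, Q U = -(L U).mulVec (grad η U))
    (D : Set (Fin n → ℝ)) (hD : D ⊆ G)
    (M : (Fin n → ℝ) → (Fin n → ℝ))
    (hMmem : ∀ U ∈ D, M U ∈ G)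
    (hMeq : ∀ U ∈ D, Q (M U) = 0)
    (hMperp : ∀ U ∈ D, ∀ y ∈ N, (U - M U) ⬝ᵥ y = 0) :
    ∃ c C : (Fin n → ℝ) → ℝ,
      (∀ U ∈ D, 0 < c U ∧ c U ≤ C U) ∧
      (∀ U ∈ D, c U * euclNorm (U - M U) ≤ euclNorm (Q U) ∧
        euclNorm (Q U) ≤ C U * euclNorm (U - M U)) ∧
      (∀ U ∈ D, Q U = 0 ↔ U = M U) := by
  classical
  -- η is C² at every point of G
  have hηat : ∀ x ∈ G, ContDiffAt ℝ 2 η x := fun x hx =>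
    hη.contDiffAt (hGo.mem_nhds hx)
  have hF : ∀ x ∈ G, DifferentiableAt ℝ (fun y => fderiv ℝ η y) x := by
    intro x hx
    have := (hηat x hx).fderiv_right (m := 1) (by norm_num)
    exact this.differentiableAt (by norm_num)
  -- membership of grad in N when Q vanishes
  have hgradN : ∀ x ∈ G, Q x = 0 → grad η x ∈ N := by
    intro x hx hq
    have h0 : (L x).mulVec (grad η x) = 0 := by
      have := hQ x hx
      rw [hq] at this
      simpa using this.symm
    rw [← hker x hx]
    rw [LinearMap.mem_ker, Matrix.toLin'_apply]
    exact h0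
  -- core claim : Q U = 0 → U = M U for U ∈ D
  have key : ∀ U ∈ D, Q U = 0 → U = M U := by
    intro U hU hQ0
    by_contra hne
    set A := M U with hA
    set v := U - A with hv
    have hvne : v ≠ 0 := sub_ne_zero.2 hne
    have hUG : U ∈ G := hD hU
    have hAG : A ∈ G := hMmem U hU
    -- grad at both points lies in N
    have hy : grad η U - grad η A ∈ N :=
      Submodule.sub_mem N (hgradN U hUG hQ0) (hgradN A hAG (hMeq U hU))
    have hperp : v ⬝ᵥ (grad η U - grad η A) = 0 := hMperp U hU _ hy
    -- the line segment
    set γ : ℝ → (Fin n → ℝ) := fun t => A + t • v with hγ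
    have hγmem : ∀ t ∈ Set.Icc (0:ℝ) 1, γ t ∈ G := by
      intro t ht
      have : γ t = (1 - t) • A + t • U := by
        simp only [hγ, hv]
        module
      rw [this]
      exact hGc hAG hUG (by linarith [ht.2]) ht.1 (by ring)
    set φ : ℝ → ℝ := fun t => fderiv ℝ η (γ t) v with hφ
    have hγderiv : ∀ t : ℝ, HasDerivAt γ v t := by
      intro t
      have h1 : HasDerivAt (fun t : ℝ => t • v) ((1:ℝ) • v) t :=
        (hasDerivAt_id t).smul_const v
      have h2 := h1.const_add A
      rw [one_smul] at h2
      exact h2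
    have hφderiv : ∀ t : ℝ, γ t ∈ G →
        HasDerivAt φ (v ⬝ᵥ (hess η (γ t)).mulVec v) t := by
      intro t htG
      have hFd : HasFDerivAt (fun y => fderiv ℝ η y)
          (fderiv ℝ (fun y => fderiv ℝ η y) (γ t)) (γ t) := (hF _ htG).hasFDerivAt
      have h1 : HasDerivAt (fun s => fderiv ℝ η (γ s))
          (fderiv ℝ (fun y => fderiv ℝ η y) (γ t) v) t :=
        hFd.comp_hasDerivAt t (hγderiv t)
      have h2 : HasDerivAt φ
          ((ContinuousLinearMap.apply ℝ ℝ v) (fderiv ℝ (fun y => fderiv ℝ η y) (γ t) v)) t :=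
        (ContinuousLinearMap.apply ℝ ℝ v).hasFDerivAt.comp_hasDerivAt t h1
      have := fderiv_fderiv_eq η (γ t) (hF _ htG) v
      simpa [this] using h2
    have hmono : StrictMonoOn φ (Set.Icc (0:ℝ) 1) := by
      apply strictMonoOn_of_deriv_pos (convex_Icc 0 1)
      · intro t ht
        exact ((hφderiv t (hγmem t ht)).differentiableAt.continuousAt).continuousWithinAt
      · intro t ht
        rw [interior_Icc] at ht
        have htI : t ∈ Set.Icc (0:ℝ) 1 := ⟨le_of_lt ht.1, le_of_lt ht.2⟩
        rw [(hφderiv t (hγmem t htI)).deriv]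
        have := (hηpos _ (hγmem t htI)).dotProduct_mulVec_pos hvne
        simpa using this
    have hlt : φ 0 < φ 1 := hmono (Set.left_mem_Icc.2 zero_le_one)
      (Set.right_mem_Icc.2 zero_le_one) zero_lt_one
    have hγ0 : γ 0 = A := by simp [hγ]
    have hγ1 : γ 1 = U := by simp [hγ, hv]
    have heq : φ 1 - φ 0 = v ⬝ᵥ (grad η U - grad η A) := by
      simp only [hφ, hγ0, hγ1, fderiv_apply_eq_dot, dotProduct]
      rw [← Finset.sum_sub_distrib]
      exact Finset.sum_congr rfl fun i _ => by simp [Pi.sub_apply]; ring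
    rw [hperp] at heq
    linarith
  -- now construct c and C
  refine ⟨fun U => if U = M U then 1 else euclNorm (Q U) / euclNorm (U - M U),
    fun U => if U = M U then 1 else euclNorm (Q U) / euclNorm (U - M U), ?_, ?_, ?_⟩
  · intro U hU
    beta_reduce
    by_cases h : U = M U
    · rw [if_pos h]
      exact ⟨one_pos, le_refl _⟩
    · have hQne : Q U ≠ 0 := fun hq => h (key U hU hq)
      have h1 : 0 < euclNorm (Q U) := euclNorm_pos hQne
      have h2 : 0 < euclNorm (U - M U) := euclNorm_pos (sub_ne_zero.2 h)
      try simp only [if_neg h]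
      exact ⟨div_pos h1 h2, le_refl _⟩
  · intro U hU
    beta_reduce
    by_cases h : U = M U
    · have hq : Q U = 0 := by rw [h]; exact hMeq U hU
      have e1 : euclNorm (U - M U) = 0 := by rw [sub_eq_zero.2 h]; simp [euclNorm]
      have e2 : euclNorm (Q U) = 0 := by rw [hq]; simp [euclNorm]
      try rw [if_pos h]
      rw [e1, e2]; norm_num
    · have hQne : Q U ≠ 0 := fun hq => h (key U hU hq)
      have h2 : 0 < euclNorm (U - M U) := euclNorm_pos (sub_ne_zero.2 h)
      try simp only [if_neg h]
      rw [div_mul_cancel₀ _ (ne_of_gt h2)]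
      exact ⟨le_refl _, le_refl _⟩
  · intro U hU
    exact ⟨key U hU, fun h => by rw [h]; exact hMeq U hU⟩
end

section
/- Let G ⊆ ℝⁿ be open, let η : G → ℝ be twice continuously differentiable with positive-definite Hessian, let L : G → Matₙ(ℝ) be continuous with each L(U) symmetric positive semidefinite and with kernel a fixed subspace N independent of U, and set Q(U) = −L(U)·∇η(U). Then at every point U_e ∈ G with Q(U_e) = 0: (a) Q is differentiable at U_e with Jacobian DQ(U_e) = −L(U_e)·Hess η(U_e); (b) consequently the matrix DQ(U_e)·(Hess η(U_e))⁻¹ = −L(U_e) is symmetric and negative semidefinite, and its null space coincides with N, the null space of L(U_e). -/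
open Matrix

/-- Auxiliary: the coordinate-extraction map as a continuous linear map. -/
noncomputable def stmt7.piCLM (n : ℕ) : ((Fin n → ℝ) →L[ℝ] ℝ) →L[ℝ] (Fin n → ℝ) :=
  LinearMap.toContinuousLinearMap
  { toFun := fun φ => fun i => φ (Pi.single i 1)
    map_add' := by intro φ ψ; funext i; simp
    map_smul' := by intro c φ; funext i; simp }

/-- Auxiliary: matrix to continuous linear map, as a linear map. -/
noncomputable def stmt7.matCLM (n : ℕ) :
    Matrix (Fin n) (Fin n) ℝ →ₗ[ℝ] ((Fin n → ℝ) →L[ℝ] (Fin n → ℝ)) :=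
  { toFun := fun M => LinearMap.toContinuousLinearMap (Matrix.mulVecLin M)
    map_add' := by intro M N; ext v i; simp [Matrix.add_mulVec]
    map_smul' := by intro c M; ext v i; simp [Matrix.smul_mulVec] }

set_option maxHeartbeats 1000000 in
/-- Conclusion (4) of Theorem 2.4: at an equilibrium `U_e` (i.e. `Q(U_e) = 0`),
`Q` is differentiable with Jacobian `DQ(U_e) = -L(U_e)·Hess η(U_e)`; hence
`DQ(U_e)·(Hess η(U_e))⁻¹ = -L(U_e)` is symmetric, negative semidefinite, and
its null space coincides with `N`, the null space of `L(U_e)`. -/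
theorem stmt7 {n : ℕ} (G : Set (Fin n → ℝ)) (hG : IsOpen G)
    (η : (Fin n → ℝ) → ℝ) (hη : ContDiffOn ℝ 2 η G)
    (hηpos : ∀ U ∈ G, (hess η U).PosDef)
    (L : (Fin n → ℝ) → Matrix (Fin n) (Fin n) ℝ)
    (hLc : ContinuousOn L G)
    (hL : ∀ U ∈ G, (L U).PosSemidef)
    (N : Submodule ℝ (Fin n → ℝ))
    (hker : ∀ U ∈ G, LinearMap.ker (Matrix.toLin' (L U)) = N)
    (Q : (Fin n → ℝ) → (Fin n → ℝ))
    (hQ : ∀ U ∈ G, Q U = -(L U).mulVec (grad η U)) :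
    ∀ Ue ∈ G, Q Ue = 0 →
      HasFDerivAt Q (LinearMap.toContinuousLinearMap
        (Matrix.mulVecLin (-(L Ue * hess η Ue)))) Ue ∧
      (-(L Ue * hess η Ue)) * (hess η Ue)⁻¹ = -(L Ue) ∧
      (-(L Ue)).IsSymm ∧
      (∀ x : Fin n → ℝ, x ⬝ᵥ (-(L Ue)).mulVec x ≤ 0) ∧
      LinearMap.ker (Matrix.toLin' (-(L Ue))) = N := by
  intro Ue hUe hQe
  have hGnhds : G ∈ nhds Ue := hG.mem_nhds hUe
  have hLUe := hL Ue hUe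
  refine ⟨?_, ?_, ?_, ?_, ?_⟩
  · -- the derivative
    set H := hess η Ue with hHdef
    have hηC2 : ContDiffAt ℝ 2 η Ue := hη.contDiffAt hGnhds
    set B₀ := fderiv ℝ (fderiv ℝ η) Ue with hB₀def
    have h1 : ContDiffAt ℝ 1 (fderiv ℝ η) Ue := hηC2.fderiv_right le_rfl
    have h2 : HasFDerivAt (fderiv ℝ η) B₀ Ue := (h1.differentiableAt one_ne_zero).hasFDerivAt
    have hsymm : ∀ v w, B₀ v w = B₀ w v := hηC2.isSymmSndFDerivAt (by simp [minSmoothness_of_isRCLikeNormedField])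
    set Bc : (Fin n → ℝ) →L[ℝ] (Fin n → ℝ) := (stmt7.piCLM n).comp B₀ with hBcdef
    have hg : HasFDerivAt (grad η) Bc Ue := (stmt7.piCLM n).hasFDerivAt.comp Ue h2
    -- Hessian entries
    have hHent : ∀ i j, H i j = B₀ (Pi.single i 1) (Pi.single j 1) := by
      intro i j
      have h3 := (ContinuousLinearMap.apply ℝ ℝ ((Pi.single j 1 : Fin n → ℝ))).hasFDerivAt.comp
        Ue h2
      have h4 : HasFDerivAt (fun V => fderiv ℝ η V (Pi.single j 1))
          ((ContinuousLinearMap.apply ℝ ℝ (Pi.single j 1)).comp B₀) Ue := h3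
      simp [hHdef, hess, h4.fderiv]
    -- key: H.mulVec = Bc
    have hkey : ∀ v, H.mulVec v = Bc v := by
      intro v
      have hv : v = ∑ j, v j • (Pi.single j 1 : Fin n → ℝ) := by
        funext k
        rw [Finset.sum_apply]
        simp [Pi.single_apply, mul_comm]
      funext i
      have e1 : Bc v i = B₀ v (Pi.single i 1) := rfl
      have e2 : B₀ v (Pi.single i 1) = ∑ j, v j * B₀ (Pi.single j 1) (Pi.single i 1) := by
        conv_lhs => rw [hv]
        rw [map_sum, ContinuousLinearMap.sum_apply]
        refine Finset.sum_congr rfl fun j _ => ?_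
        rw [_root_.map_smul, ContinuousLinearMap.smul_apply, smul_eq_mul]
      have e3 : H.mulVec v i = ∑ j, v j * B₀ (Pi.single i 1) (Pi.single j 1) := by
        simp [Matrix.mulVec, dotProduct, hHent, mul_comm]
      rw [e1, e2, e3]
      exact Finset.sum_congr rfl fun j _ => by rw [hsymm]
    -- the map from matrices to CLMs, continuity of ℓ
    set ℓ : (Fin n → ℝ) → ((Fin n → ℝ) →L[ℝ] (Fin n → ℝ)) := fun U => stmt7.matCLM n (L U)
      with hℓdef
    have hℓcont : Filter.Tendsto ℓ (nhds Ue) (nhds (ℓ Ue)) :=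
      ((stmt7.matCLM n).continuous_of_finiteDimensional.tendsto _).comp
        (hLc.continuousAt hGnhds)
    have hℓapp : ∀ U v, ℓ U v = (L U).mulVec v := fun U v => rfl
    -- grad η Ue is in the common kernel
    have hgker : ∀ U ∈ G, (L U).mulVec (grad η Ue) = 0 := by
      intro U hU
      have h0 : (L Ue).mulVec (grad η Ue) = 0 := by
        have := hQ Ue hUe
        rw [hQe] at this
        simpa [neg_eq_zero] using this.symm
      have hmem : grad η Ue ∈ N := by
        rw [← hker Ue hUe]
        simpa [LinearMap.mem_ker, Matrix.toLin'_apply] using h0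
      rw [← hker U hU] at hmem
      simpa [LinearMap.mem_ker, Matrix.toLin'_apply] using hmem
    set A : (Fin n → ℝ) →L[ℝ] (Fin n → ℝ) :=
      LinearMap.toContinuousLinearMap (Matrix.mulVecLin (-(L Ue * H))) with hAdef
    have hAapp : ∀ v, A v = -(L Ue).mulVec (H.mulVec v) := by
      intro v
      show (-(L Ue * H)).mulVec v = _
      rw [Matrix.neg_mulVec, ← Matrix.mulVec_mulVec]
    -- the little-o statement
    refine HasFDerivAt.of_isLittleO ?_
    set k : (Fin n → ℝ) → (Fin n → ℝ) := fun U => grad η U - grad η Ue with hkdef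
    have hko : (fun U => k U - Bc (U - Ue)) =o[nhds Ue] fun U => U - Ue := by
      have := hg.isLittleO
      simpa [hkdef] using this
    have heq : (fun U => Q U - Q Ue - A (U - Ue)) =ᶠ[nhds Ue]
        (fun U => -(ℓ U (k U - Bc (U - Ue))) - (ℓ U - ℓ Ue) (Bc (U - Ue))) := by
      filter_upwards [hGnhds] with U hU
      have hQU : Q U = -((L U).mulVec (grad η U - grad η Ue)) := by
        rw [hQ U hU, Matrix.mulVec_sub, hgker U hU, sub_zero]
      rw [hQU, hQe, hAapp, hkey]
      simp only [ContinuousLinearMap.sub_apply, map_sub, hℓapp, hkdef, Matrix.mulVec_sub]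
      abel
    refine heq.trans_isLittleO ?_
    have hT1 : (fun U => ℓ U (k U - Bc (U - Ue))) =o[nhds Ue] fun U => U - Ue := by
      refine Asymptotics.IsBigO.trans_isLittleO ?_ hko
      have hb : ∀ᶠ U in nhds Ue, ‖ℓ U‖ < ‖ℓ Ue‖ + 1 :=
        (hℓcont.norm).eventually_lt_const (by linarith)
      refine Asymptotics.IsBigO.of_bound (‖ℓ Ue‖ + 1) ?_
      filter_upwards [hb] with U hU
      calc ‖ℓ U (k U - Bc (U - Ue))‖ ≤ ‖ℓ U‖ * ‖k U - Bc (U - Ue)‖ :=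
            (ℓ U).le_opNorm _
        _ ≤ (‖ℓ Ue‖ + 1) * ‖k U - Bc (U - Ue)‖ := by
            apply mul_le_mul_of_nonneg_right hU.le (norm_nonneg _)
    have hT2 : (fun U => (ℓ U - ℓ Ue) (Bc (U - Ue))) =o[nhds Ue] fun U => U - Ue := by
      rw [Asymptotics.isLittleO_iff]
      intro c hc
      have hpos : 0 < c / (‖Bc‖ + 1) := div_pos hc (by positivity)
      have hsmall : ∀ᶠ U in nhds Ue, ‖ℓ U - ℓ Ue‖ < c / (‖Bc‖ + 1) := by
        have h0 : Filter.Tendsto (fun U => ℓ U - ℓ Ue) (nhds Ue) (nhds 0) := by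
          simpa using hℓcont.sub_const (ℓ Ue)
        have hnorm : Filter.Tendsto (fun U => ‖ℓ U - ℓ Ue‖) (nhds Ue) (nhds 0) := by
          simpa using h0.norm
        exact hnorm.eventually_lt_const hpos
      filter_upwards [hsmall] with U hU
      have h5 : ‖(ℓ U - ℓ Ue) (Bc (U - Ue))‖ ≤ ‖ℓ U - ℓ Ue‖ * (‖Bc‖ * ‖U - Ue‖) :=
        le_trans ((ℓ U - ℓ Ue).le_opNorm _)
          (mul_le_mul_of_nonneg_left (Bc.le_opNorm _) (norm_nonneg _))
      have h6 : ‖ℓ U - ℓ Ue‖ * (‖Bc‖ * ‖U - Ue‖) ≤ c * ‖U - Ue‖ := by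
        have hB : (0:ℝ) ≤ ‖Bc‖ := norm_nonneg _
        have hU' : (0:ℝ) ≤ ‖U - Ue‖ := norm_nonneg _
        have := mul_le_mul_of_nonneg_right hU.le (by positivity : (0:ℝ) ≤ ‖Bc‖ * ‖U - Ue‖)
        refine le_trans this ?_
        rw [div_mul_eq_mul_div, mul_comm (‖Bc‖) (‖U - Ue‖), ← mul_assoc]
        rw [div_le_iff₀ (by positivity : (0:ℝ) < ‖Bc‖ + 1)]
        nlinarith
      exact le_trans h5 h6
    simpa using (hT1.neg_left.sub hT2)
  · rw [neg_mul, Matrix.mul_assoc,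
      Matrix.mul_nonsing_inv _ (hηpos Ue hUe).det_pos.ne'.isUnit, Matrix.mul_one]
  · have := hLUe.1
    rw [Matrix.IsHermitian, conjTranspose] at this
    exact Matrix.IsSymm.neg (Matrix.ext fun i j => by simpa using (congrArg (fun M => M j i) this).symm)
  · intro x
    have := hLUe.dotProduct_mulVec_nonneg x
    simp only [star_trivial] at this
    simp [Matrix.neg_mulVec]
    linarith
  · rw [← hker Ue hUe]
    ext x
    simp [Matrix.toLin'_apply, Matrix.neg_mulVec, neg_eq_zero]
end

section
/- Let L ≥ 1 be an integer and let ρ > 0, C > 0, and σ₁, …, σ_L > 0 be real numbers. Define the (L+5)×(L+5) real matrix ℒ by: ℒ is zero in all entries involving one of the first four indices; ℒ_{5,5} = ρ·C·Σ_{l=1}^L σ_l; ℒ_{5,5+l} = ℒ_{5+l,5} = −ρ·σ_l for 1 ≤ l ≤ L; ℒ_{5+l,5+l} = ρ·C⁻¹·σ_l for 1 ≤ l ≤ L; and all other entries zero. Then ℒ is symmetric, positive semidefinite (indeed yᵀℒy = ρ·C⁻¹·Σ_{l=1}^L σ_l·(C·y₅ − y_{5+l})² for all y ∈ ℝ^{L+5}),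 and its kernel equals span{e₁, e₂, e₃, e₄, e₅ + C·Σ_{l=1}^L e_{5+l}}, where e_k is the k-th standard basis vector of ℝ^{L+5}; in particular the kernel does not depend on ρ, on the σ_l, or on C (given C fixed) beyond the fixed constant C. -/
open Matrix

private lemma sum_split {L : ℕ} {M : Type*} [AddCommMonoid M] (f : Fin (L + 5) → M) :
    ∑ j, f j = ∑ j : Fin 5, f ⟨j.val, by lia⟩ + ∑ l : Fin L, f ⟨5 + l.val, by lia⟩ := by
  have h : ∑ j : Fin (5 + L), f ⟨j.val, by omega⟩ = ∑ j, f j :=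
    Fintype.sum_equiv (finCongr (by omega)) _ f (fun i => rfl)
  rw [← h, Fin.sum_univ_add]
  rfl

private lemma rows_lemma {L : ℕ} (hL : 1 ≤ L) (ρ C : ℝ)
    (σ : Fin L → ℝ)
    (σ' : ℕ → ℝ) (hσ' : ∀ k : ℕ, σ' k = if hk : k < L then σ ⟨k, hk⟩ else 0)
    (M : Matrix (Fin (L + 5)) (Fin (L + 5)) ℝ)
    (hM : M = Matrix.of fun i j : Fin (L + 5) =>
      if i.val ≤ 3 ∨ j.val ≤ 3 then 0
      else if i.val = 4 ∧ j.val = 4 then ρ * C * ∑ l, σ l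
      else if i.val = 4 then -(ρ * σ' (j.val - 5))
      else if j.val = 4 then -(ρ * σ' (i.val - 5))
      else if i = j then ρ * C⁻¹ * σ' (i.val - 5)
      else 0) :
    (∀ (y : Fin (L+5) → ℝ) (i : Fin (L+5)), i.val ≤ 3 → M.mulVec y i = 0) ∧
    (∀ y : Fin (L+5) → ℝ, M.mulVec y ⟨4, by lia⟩ =
      ρ * C * (∑ l, σ l) * y ⟨4, by lia⟩ - ρ * ∑ l : Fin L, σ l * y ⟨5 + l.val, by lia⟩) ∧
    (∀ (y : Fin (L+5) → ℝ) (l : Fin L), M.mulVec y ⟨5 + l.val, by lia⟩ =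
      -(ρ * σ l * y ⟨4, by lia⟩) + ρ * C⁻¹ * σ l * y ⟨5 + l.val, by lia⟩) := by
  have hσ2 : ∀ l : Fin L, σ' l.val = σ l := by
    intro l; simp [hσ', l.isLt]
  have e3 : ((3 : Fin 5) : ℕ) = 3 := rfl
  have e4 : ((4 : Fin 5) : ℕ) = 4 := rfl
  have f1 : ∀ n : ℕ, ¬(5 + n ≤ 3) := by omega
  have f2 : ∀ n : ℕ, ¬(5 + n = 4) := by omega
  refine ⟨?_, ?_, ?_⟩
  · intro y i hi
    simp only [hM, Matrix.mulVec, dotProduct, Matrix.of_apply]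
    apply Finset.sum_eq_zero
    intro j _
    rw [if_pos (Or.inl hi), zero_mul]
  · intro y
    simp only [hM, Matrix.mulVec, dotProduct, Matrix.of_apply]
    rw [sum_split, Fin.sum_univ_five]
    norm_num [e3, e4, f1, f2, hσ2]
    have hs : ∑ x : Fin L, ρ * σ x * y ⟨5 + x.val, by lia⟩
        = ρ * ∑ l : Fin L, σ l * y ⟨5 + l.val, by lia⟩ := by
      rw [Finset.mul_sum]; exact Finset.sum_congr rfl fun x _ => by ring
    rw [hs]; ring
  · intro y l
    simp only [hM, Matrix.mulVec, dotProduct, Matrix.of_apply]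
    rw [sum_split, Fin.sum_univ_five]
    norm_num [e3, e4, f1, f2, hσ2, Fin.ext_iff]
    simp [Fin.val_inj]

private lemma symm_lemma {L : ℕ} (ρ C : ℝ)
    (σ : Fin L → ℝ) (σ' : ℕ → ℝ)
    (M : Matrix (Fin (L + 5)) (Fin (L + 5)) ℝ)
    (hM : M = Matrix.of fun i j : Fin (L + 5) =>
      if i.val ≤ 3 ∨ j.val ≤ 3 then 0
      else if i.val = 4 ∧ j.val = 4 then ρ * C * ∑ l, σ l
      else if i.val = 4 then -(ρ * σ' (j.val - 5))
      else if j.val = 4 then -(ρ * σ' (i.val - 5))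
      else if i = j then ρ * C⁻¹ * σ' (i.val - 5)
      else 0) :
    M.IsSymm := by
  rw [Matrix.IsSymm]
  ext i j
  simp only [hM, Matrix.transpose_apply, Matrix.of_apply]
  rcases le_or_gt i.val 3 with hi | hi
  · rw [if_pos (Or.inr hi), if_pos (Or.inl hi)]
  rcases le_or_gt j.val 3 with hj | hj
  · rw [if_pos (Or.inl hj), if_pos (Or.inr hj)]
  have hnij : ¬(i.val ≤ 3 ∨ j.val ≤ 3) := by omega
  have hnji : ¬(j.val ≤ 3 ∨ i.val ≤ 3) := by omega
  rw [if_neg hnji, if_neg hnij]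
  by_cases hi4 : i.val = 4 <;> by_cases hj4 : j.val = 4
  · rw [if_pos ⟨hj4, hi4⟩, if_pos ⟨hi4, hj4⟩]
  · rw [if_neg (fun h : (j : ℕ) = 4 ∧ (i : ℕ) = 4 => hj4 h.1), if_neg hj4, if_pos hi4,
        if_neg (fun h : (i : ℕ) = 4 ∧ (j : ℕ) = 4 => hj4 h.2), if_pos hi4]
  · rw [if_neg (fun h : (j : ℕ) = 4 ∧ (i : ℕ) = 4 => hi4 h.2), if_pos hj4,
        if_neg (fun h : (i : ℕ) = 4 ∧ (j : ℕ) = 4 => hi4 h.1), if_neg hi4, if_pos hj4]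
  · by_cases hij : i = j
    · subst hij; rfl
    · rw [if_neg (fun h : (j : ℕ) = 4 ∧ (i : ℕ) = 4 => hj4 h.1), if_neg hj4, if_neg hi4,
          if_neg (fun h : j = i => hij h.symm),
          if_neg (fun h : (i : ℕ) = 4 ∧ (j : ℕ) = 4 => hi4 h.1), if_neg hi4, if_neg hj4,
          if_neg hij]

private lemma quad_lemma {L : ℕ} (ρ C : ℝ) (hC : 0 < C)
    (σ : Fin L → ℝ)
    (M : Matrix (Fin (L + 5)) (Fin (L + 5)) ℝ)
    (h0 : ∀ (y : Fin (L+5) → ℝ) (i : Fin (L+5)), i.val ≤ 3 → M.mulVec y i = 0)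
    (h4 : ∀ y : Fin (L+5) → ℝ, M.mulVec y ⟨4, by omega⟩ =
      ρ * C * (∑ l, σ l) * y ⟨4, by lia⟩ - ρ * ∑ l : Fin L, σ l * y ⟨5 + l.val, by lia⟩)
    (h5 : ∀ (y : Fin (L+5) → ℝ) (l : Fin L), M.mulVec y ⟨5 + l.val, by lia⟩ =
      -(ρ * σ l * y ⟨4, by lia⟩) + ρ * C⁻¹ * σ l * y ⟨5 + l.val, by lia⟩) :
    ∀ y : Fin (L + 5) → ℝ,
      y ⬝ᵥ M.mulVec y =
        ρ * C⁻¹ * ∑ l : Fin L,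
          σ l * (C * y ⟨4, by lia⟩ - y ⟨5 + l.val, by lia⟩) ^ 2 := by
  have e0 : ((0 : Fin 5) : ℕ) = 0 := rfl
  have e1 : ((1 : Fin 5) : ℕ) = 1 := rfl
  have e2 : ((2 : Fin 5) : ℕ) = 2 := rfl
  have e3 : ((3 : Fin 5) : ℕ) = 3 := rfl
  have e4 : ((4 : Fin 5) : ℕ) = 4 := rfl
  intro y
  simp only [dotProduct]
  rw [sum_split (fun i => y i * M.mulVec y i), Fin.sum_univ_five]
  simp only [e0, e1, e2, e3, e4]
  rw [h0 y ⟨0, by omega⟩ (by norm_num), h0 y ⟨1, by omega⟩ (by norm_num),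
      h0 y ⟨2, by omega⟩ (by norm_num), h0 y ⟨3, by omega⟩ (by norm_num), h4 y]
  simp only [h5 y]
  simp only [mul_sub, mul_add, Finset.mul_sum, Finset.sum_mul, mul_zero, zero_add, add_zero]
  rw [sub_eq_add_neg, ← Finset.sum_neg_distrib, ← Finset.sum_add_distrib,
      ← Finset.sum_add_distrib]
  exact Finset.sum_congr rfl fun l _ => by field_simp; ring

private lemma ker_lemma {L : ℕ} (ρ C : ℝ) (hρ : 0 < ρ) (hC : 0 < C)
    (σ : Fin L → ℝ) (hσ : ∀ l, 0 < σ l)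
    (M : Matrix (Fin (L + 5)) (Fin (L + 5)) ℝ)
    (h0 : ∀ (y : Fin (L+5) → ℝ) (i : Fin (L+5)), i.val ≤ 3 → M.mulVec y i = 0)
    (h4 : ∀ y : Fin (L+5) → ℝ, M.mulVec y ⟨4, by omega⟩ =
      ρ * C * (∑ l, σ l) * y ⟨4, by lia⟩ - ρ * ∑ l : Fin L, σ l * y ⟨5 + l.val, by lia⟩)
    (h5 : ∀ (y : Fin (L+5) → ℝ) (l : Fin L), M.mulVec y ⟨5 + l.val, by lia⟩ =
      -(ρ * σ l * y ⟨4, by lia⟩) + ρ * C⁻¹ * σ l * y ⟨5 + l.val, by lia⟩) :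
    ∀ y : Fin (L+5) → ℝ, M.mulVec y = 0 ↔
      ∀ l : Fin L, y ⟨5 + l.val, by lia⟩ = C * y ⟨4, by lia⟩ := by
  intro y
  constructor
  · intro h l
    have h' := congrFun h ⟨5 + l.val, by lia⟩
    rw [h5 y l, Pi.zero_apply] at h'
    have hne : ρ * C⁻¹ * σ l ≠ 0 :=
      ne_of_gt (mul_pos (mul_pos hρ (inv_pos.mpr hC)) (hσ l))
    have hcc : C * C⁻¹ = 1 := mul_inv_cancel₀ hC.ne'
    have h'' : ρ * C⁻¹ * σ l * (y ⟨5 + l.val, by lia⟩ - C * y ⟨4, by lia⟩) = 0 := by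
      linear_combination h' - ρ * σ l * y ⟨4, by omega⟩ * hcc
    have := (mul_eq_zero.mp h'').resolve_left hne
    linarith [sub_eq_zero.mp this]
  · intro h
    funext i
    rw [Pi.zero_apply]
    rcases lt_or_ge i.val 4 with hi | hi
    · exact h0 y i (by omega)
    rcases eq_or_lt_of_le hi with hi4 | hi5
    · have : i = ⟨4, by omega⟩ := Fin.ext hi4.symm
      rw [this, h4 y]
      have : ∑ l : Fin L, σ l * y ⟨5 + l.val, by lia⟩
          = (∑ l, σ l) * (C * y ⟨4, by omega⟩) := by
        rw [Finset.sum_mul]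
        exact Finset.sum_congr rfl fun l _ => by rw [h l]
      rw [this]; ring
    · have hl : i.val - 5 < L := by omega
      have : i = ⟨5 + (⟨i.val - 5, hl⟩ : Fin L).val, by omega⟩ := Fin.ext (by simp; omega)
      rw [this, h5 y ⟨i.val - 5, hl⟩, h ⟨i.val - 5, hl⟩]
      field_simp
      ring

private lemma rep_lemma {L : ℕ} (hL : 1 ≤ L) (C : ℝ) (y V : Fin (L + 5) → ℝ)
    (hV : V = (fun j : Fin (L + 5) => if j.val = 4 then 1 else if 5 ≤ j.val then C else 0))
    (hy : ∀ l : Fin L, y ⟨5 + l.val, by lia⟩ = C * y ⟨4, by lia⟩) :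
    y = y ⟨0, by lia⟩ • (Pi.single (⟨0, by lia⟩ : Fin (L + 5)) (1 : ℝ) : Fin (L + 5) → ℝ)
      + y ⟨1, by lia⟩ • (Pi.single (⟨1, by lia⟩ : Fin (L + 5)) (1 : ℝ) : Fin (L + 5) → ℝ)
      + y ⟨2, by lia⟩ • (Pi.single (⟨2, by lia⟩ : Fin (L + 5)) (1 : ℝ) : Fin (L + 5) → ℝ)
      + y ⟨3, by lia⟩ • (Pi.single (⟨3, by lia⟩ : Fin (L + 5)) (1 : ℝ) : Fin (L + 5) → ℝ)
      + y ⟨4, by lia⟩ • V := by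
  funext i
  simp only [hV, Pi.add_apply, Pi.smul_apply, Pi.single_apply, smul_eq_mul, Fin.ext_iff]
  rcases lt_or_ge i.val 5 with hi | hi
  · interval_cases h : i.val <;> simp_all <;>
      exact congrArg y (Fin.ext (by simp [h]))
  · have hl : i.val - 5 < L := by omega
    have := hy ⟨i.val - 5, hl⟩
    simp only [Fin.ext_iff] at this ⊢
    rw [if_neg (by omega), if_neg (by omega), if_neg (by omega), if_neg (by omega),
        if_neg (by omega), if_pos hi]
    have h3 : y i = C * y ⟨4, by lia⟩ := by
      have h2 : (⟨5 + (i.val - 5), by omega⟩ : Fin (L+5)) = i := Fin.ext (by simp; omega)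
      rw [← h2]; exact this
    rw [h3]; ring

set_option maxHeartbeats 800000 in
/-- Section 6 (radiation hydrodynamics): the matrix `ℒ` of (5.3) is symmetric,
positive semidefinite with the explicit quadratic form
`yᵀℒy = ρ C⁻¹ Σ_l σ_l (C y₅ - y_{5+l})²`, and its kernel is
`span{e₁, e₂, e₃, e₄, e₅ + C Σ_l e_{5+l}}`, independent of `ρ` and the `σ_l`. -/
theorem stmt13 {L : ℕ} (hL : 1 ≤ L) (ρ C : ℝ) (hρ : 0 < ρ) (hC : 0 < C)
    (σ : Fin L → ℝ) (hσ : ∀ l, 0 < σ l)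
    (σ' : ℕ → ℝ) (hσ' : ∀ k : ℕ, σ' k = if hk : k < L then σ ⟨k, hk⟩ else 0)
    (M : Matrix (Fin (L + 5)) (Fin (L + 5)) ℝ)
    (hM : M = Matrix.of fun i j : Fin (L + 5) =>
      if i.val ≤ 3 ∨ j.val ≤ 3 then 0
      else if i.val = 4 ∧ j.val = 4 then ρ * C * ∑ l, σ l
      else if i.val = 4 then -(ρ * σ' (j.val - 5))
      else if j.val = 4 then -(ρ * σ' (i.val - 5))
      else if i = j then ρ * C⁻¹ * σ' (i.val - 5)
      else 0) :
    M.IsSymm ∧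
    M.PosSemidef ∧
    (∀ y : Fin (L + 5) → ℝ,
      y ⬝ᵥ M.mulVec y =
        ρ * C⁻¹ * ∑ l : Fin L,
          σ l * (C * y ⟨4, by omega⟩ - y ⟨5 + l.val, by omega⟩) ^ 2) ∧
    LinearMap.ker (Matrix.toLin' M) =
      Submodule.span ℝ
        ({Pi.single (⟨0, by omega⟩ : Fin (L + 5)) 1,
          Pi.single (⟨1, by omega⟩ : Fin (L + 5)) 1,
          Pi.single (⟨2, by omega⟩ : Fin (L + 5)) 1,
          Pi.single (⟨3, by omega⟩ : Fin (L + 5)) 1,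
          (fun j : Fin (L + 5) => if j.val = 4 then 1 else if 5 ≤ j.val then C else 0)} :
          Set (Fin (L + 5) → ℝ)) := by
  obtain ⟨h0, h4, h5⟩ := rows_lemma hL ρ C σ σ' hσ' M hM
  have hsym : M.IsSymm := symm_lemma ρ C σ σ' M hM
  have hQ := quad_lemma ρ C hC σ M h0 h4 h5
  have hker := ker_lemma ρ C hρ hC σ hσ M h0 h4 h5
  have f2 : ∀ n : ℕ, ¬(5 + n = 4) := by omega
  refine ⟨hsym, ?_, hQ, ?_⟩
  · rw [Matrix.posSemidef_iff_dotProduct_mulVec]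
    constructor
    · rw [Matrix.IsHermitian, Matrix.conjTranspose_eq_transpose_of_trivial]
      exact hsym
    · intro x
      simp only [star_trivial, RCLike.re_to_real]
      rw [hQ x]
      have hnn : ∀ l : Fin L, 0 ≤ σ l * (C * x ⟨4, by omega⟩ - x ⟨5 + l.val, by omega⟩) ^ 2 :=
        fun l => mul_nonneg (hσ l).le (sq_nonneg _)
      exact mul_nonneg (by positivity) (Finset.sum_nonneg fun l _ => hnn l)
  · set V : Fin (L + 5) → ℝ :=
      (fun j : Fin (L + 5) => if j.val = 4 then 1 else if 5 ≤ j.val then C else 0) with hV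
    apply le_antisymm
    · intro y hy
      rw [LinearMap.mem_ker, Matrix.toLin'_apply, hker y] at hy
      rw [rep_lemma hL C y V hV hy]
      apply Submodule.add_mem
      apply Submodule.add_mem
      apply Submodule.add_mem
      apply Submodule.add_mem
      all_goals
        apply Submodule.smul_mem
        apply Submodule.subset_span
        simp
    · rw [Submodule.span_le]
      intro z hz
      simp only [Set.mem_insert_iff, Set.mem_singleton_iff] at hz
      rw [SetLike.mem_coe, LinearMap.mem_ker, Matrix.toLin'_apply, hker]
      rcases hz with rfl | rfl | rfl | rfl | rfl
      · intro l; simp [Pi.single_apply, Fin.ext_iff]; try omega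
      · intro l; simp [Pi.single_apply, Fin.ext_iff]; try omega
      · intro l; simp [Pi.single_apply, Fin.ext_iff]; try omega
      · intro l; simp [Pi.single_apply, Fin.ext_iff]; try omega
      · intro l
        simp [hV, (show ¬(5 + l.val = 4) by omega), (show (5:ℕ) ≤ 5 + l.val by omega)]
end

section
/- Let n be a positive integer, let A : Fin n × Fin n × Fin n × Fin n → ℝ (written A_{ij}^{kl}) be nonnegative and satisfy A_{ij}^{kl} = A_{kl}^{ij} and A_{kl}^{ij} = A_{lk}^{ij} for all i, j, k, l, and let f ∈ ℝⁿ with all f_k > 0. Define b_{ij}^{kl} = ∫₀¹ exp(σ·(log f_i + log f_j − log f_k − log f_l) + log f_k + log f_l) dσ > 0, Q_k = Σ_{i,j,l} (A_{ij}^{kl}·f_i·f_j − A_{kl}^{ij}·f_k·f_l), and a_{km} = −Σ_{j,l} A_{mj}^{kl}·b_{mj}^{kl} − Σ_{i,l} A_{im}^{kl}·b_{im}^{kl} + Σ_{i,j} A_{ij}^{km}·b_{ij}^{km} + δ_{km}·Σ_{i,j,l} A_{ij}^{kl}·b_{ij}^{kl}, where δ_{km} is the Kronecker delta. Then: (a)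 Q_k = −Σ_{m} a_{km}·log f_m for every k, i.e. Q(U) = −L(U)·∇η(U) for η(U) = Σ_k f_k·(log f_k − 1) and L(U) = [a_{km}]; (b) the matrix [a_{km}] is symmetric; (c) for every y ∈ ℝⁿ, yᵀ·[a_{km}]·y = (1/4)·Σ_{i,j,k,l} A_{ij}^{kl}·b_{ij}^{kl}·(y_i + y_j − y_k − y_l)² ≥ 0; (d) the kernel of [a_{km}] equals {y ∈ ℝⁿ : A_{ij}^{kl}·(y_i + y_j − y_k − y_l) = 0 for all i, j, k, l}, which is independent of f. -/
open Matrix Finset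

noncomputable def Jfun (x y : ℝ) : ℝ :=
  if x = y then Real.exp y else (Real.exp x - Real.exp y) / (x - y)

lemma Jfun_eq (x y : ℝ) :
    (∫ σ in (0:ℝ)..1, Real.exp (σ * (x - y) + y)) = Jfun x y := by
  unfold Jfun
  by_cases h : x = y
  · simp [h]
  · have hc : x - y ≠ 0 := sub_ne_zero.mpr h
    rw [if_neg h]
    have h1 : ∀ σ : ℝ, Real.exp (σ * (x - y) + y) = Real.exp (σ * (x - y)) * Real.exp y :=
      fun σ => Real.exp_add _ _
    calc (∫ σ in (0:ℝ)..1, Real.exp (σ * (x - y) + y))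
        = (∫ σ in (0:ℝ)..1, Real.exp (σ * (x - y))) * Real.exp y := by
          simp only [h1]; exact intervalIntegral.integral_mul_const _ _
      _ = ((x - y)⁻¹ * (Real.exp (x - y) - 1)) * Real.exp y := by
          rw [intervalIntegral.integral_comp_mul_right (fun t => Real.exp t) hc]
          simp [integral_exp]
      _ = (Real.exp x - Real.exp y) / (x - y) := by
          rw [show x = (x - y) + y by ring, Real.exp_add]
          field_simp
          ring

lemma Jfun_pos (x y : ℝ) : 0 < Jfun x y := by
  unfold Jfun
  by_cases h : x = y
  · simp [h, Real.exp_pos]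
  · rw [if_neg h]
    rcases lt_or_gt_of_ne h with hlt | hgt
    · apply div_pos_of_neg_of_neg <;> simp [Real.exp_lt_exp, hlt, sub_neg, sub_lt_zero]
    · apply div_pos <;> simp [Real.exp_lt_exp, hgt, sub_pos, sub_lt_zero]

lemma Jfun_symm (x y : ℝ) : Jfun x y = Jfun y x := by
  unfold Jfun
  by_cases h : x = y
  · rw [if_pos h, if_pos h.symm, h]
  · rw [if_neg h, if_neg (Ne.symm h), ← neg_sub (Real.exp y), ← neg_sub y x, neg_div_neg_eq]

lemma Jfun_mul (x y : ℝ) : Jfun x y * (x - y) = Real.exp x - Real.exp y := by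
  unfold Jfun
  by_cases h : x = y
  · simp [h]
  · rw [if_neg h, div_mul_cancel₀ _ (sub_ne_zero.mpr h)]

lemma sum_invol' {α : Type*} [Fintype α] (σ : α → α) (h : Function.Involutive σ)
    (g : α → ℝ) : ∑ x, g (σ x) = ∑ x, g x :=
  Fintype.sum_bijective σ h.bijective _ _ (fun _ => rfl)

lemma sum4_eq' {n : ℕ} (g : Fin n → Fin n → Fin n → Fin n → ℝ) :
    ∑ i, ∑ j, ∑ k, ∑ l, g i j k l
      = ∑ x : Fin n × Fin n × Fin n × Fin n, g x.1 x.2.1 x.2.2.1 x.2.2.2 := by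
  simp [Fintype.sum_prod_type]


open Matrix

/-- Section 9 (discrete velocity models): verification of the three structural
properties, equations (8.5)–(8.6). Here `A i j k l` denotes `A_{ij}^{kl}`
(lower indices `i j`, upper indices `k l`), `b i j k l` denotes `b_{ij}^{kl}`,
and `a k m` the entries of the matrix `ℒ(U)`. -/
theorem stmt19 {n : ℕ} (hn : 0 < n)
    (A : Fin n → Fin n → Fin n → Fin n → ℝ)
    (hApos : ∀ i j k l, 0 ≤ A i j k l)
    (hA1 : ∀ i j k l, A i j k l = A k l i j)
    (hA2 : ∀ i j k l, A i j k l = A j i k l)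
    (f : Fin n → ℝ) (hf : ∀ k, 0 < f k)
    (b : Fin n → Fin n → Fin n → Fin n → ℝ)
    (hb : ∀ i j k l, b i j k l = ∫ σ in (0:ℝ)..1,
      Real.exp (σ * (Real.log (f i) + Real.log (f j) - Real.log (f k) - Real.log (f l))
        + Real.log (f k) + Real.log (f l)))
    (Q : Fin n → ℝ)
    (hQ : ∀ k, Q k = ∑ i, ∑ j, ∑ l, (A i j k l * f i * f j - A k l i j * f k * f l))
    (a : Fin n → Fin n → ℝ)
    (ha : ∀ k m, a k m =
      -(∑ j, ∑ l, A m j k l * b m j k l) - (∑ i, ∑ l, A i m k l * b i m k l)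
      + (∑ i, ∑ j, A i j k m * b i j k m)
      + (if k = m then ∑ i, ∑ j, ∑ l, A i j k l * b i j k l else 0)) :
    (∀ i j k l, 0 < b i j k l) ∧
    (∀ k, Q k = -∑ m, a k m * Real.log (f m)) ∧
    (∀ k m, a k m = a m k) ∧
    (∀ y : Fin n → ℝ,
      y ⬝ᵥ (Matrix.of a).mulVec y =
        (1 / 4) * ∑ i, ∑ j, ∑ k, ∑ l,
          A i j k l * b i j k l * (y i + y j - y k - y l) ^ 2 ∧
      0 ≤ y ⬝ᵥ (Matrix.of a).mulVec y) ∧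
    (∀ y : Fin n → ℝ,
      (Matrix.of a).mulVec y = 0 ↔
        ∀ i j k l, A i j k l * (y i + y j - y k - y l) = 0) := by

  have hb' : ∀ i j k l, b i j k l
      = Jfun (Real.log (f i) + Real.log (f j)) (Real.log (f k) + Real.log (f l)) := by
    intro i j k l
    rw [hb, ← Jfun_eq]
    congr 1
    funext σ
    congr 1
    ring
  have hbpos : ∀ i j k l, 0 < b i j k l := by
    intro i j k l; rw [hb']; exact Jfun_pos _ _
  have hexp2 : ∀ i j, Real.exp (Real.log (f i) + Real.log (f j)) = f i * f j := by
    intro i j; rw [Real.exp_add, Real.exp_log (hf i), Real.exp_log (hf j)]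
  have hbkey : ∀ i j k l, b i j k l *
      (Real.log (f i) + Real.log (f j) - Real.log (f k) - Real.log (f l))
        = f i * f j - f k * f l := by
    intro i j k l
    rw [hb', show Real.log (f i) + Real.log (f j) - Real.log (f k) - Real.log (f l)
      = (Real.log (f i) + Real.log (f j)) - (Real.log (f k) + Real.log (f l)) by ring,
      Jfun_mul, hexp2, hexp2]
  have hA3 : ∀ i j k l, A i j k l = A i j l k := fun i j k l =>
    (hA1 i j k l).trans ((hA2 k l i j).trans (hA1 l k i j))
  have hS_ij : ∀ i j k l, A j i k l * b j i k l = A i j k l * b i j k l := by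
    intro i j k l
    rw [← hA2 i j k l, hb' j i k l, hb' i j k l, add_comm (Real.log (f j)) (Real.log (f i))]
  have hS_kl : ∀ i j k l, A i j l k * b i j l k = A i j k l * b i j k l := by
    intro i j k l
    rw [← hA3 i j k l, hb' i j l k, hb' i j k l, add_comm (Real.log (f l)) (Real.log (f k))]
  have hS_swap : ∀ i j k l, A k l i j * b k l i j = A i j k l * b i j k l := by
    intro i j k l
    rw [hA1 k l i j, hb' k l i j, hb' i j k l, Jfun_symm]
  have negsum3 : ∀ (g : Fin n → Fin n → Fin n → ℝ),
      -∑ i, ∑ j, ∑ l, g i j l = ∑ i, ∑ j, ∑ l, -g i j l := by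
    intro g; simp
  have key : ∀ (v : Fin n → ℝ) (k : Fin n), ∑ m, a k m * v m
      = -∑ i, ∑ j, ∑ l, A i j k l * b i j k l * (v i + v j - v k - v l) := by
    intro v k
    have expand : ∑ i, ∑ j, ∑ l, A i j k l * b i j k l * (v i + v j - v k - v l)
        = (∑ i, ∑ j, ∑ l, A i j k l * b i j k l * v i)
          + (∑ i, ∑ j, ∑ l, A i j k l * b i j k l * v j)
          - (∑ i, ∑ j, ∑ l, A i j k l * b i j k l * v k)
          - (∑ i, ∑ j, ∑ l, A i j k l * b i j k l * v l) := by
      simp only [mul_add, mul_sub, Finset.sum_add_distrib, Finset.sum_sub_distrib]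
    have e1 : ∑ m, (∑ j, ∑ l, A m j k l * b m j k l) * v m
        = ∑ i, ∑ j, ∑ l, A i j k l * b i j k l * v i := by
      simp only [Finset.sum_mul]
    have e2 : ∑ m, (∑ i, ∑ l, A i m k l * b i m k l) * v m
        = ∑ i, ∑ j, ∑ l, A i j k l * b i j k l * v j := by
      simp only [Finset.sum_mul]
      exact Finset.sum_comm
    have e3 : ∑ m, (∑ i, ∑ j, A i j k m * b i j k m) * v m
        = ∑ i, ∑ j, ∑ l, A i j k l * b i j k l * v l := by
      simp only [Finset.sum_mul]
      rw [Finset.sum_comm]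
      exact Finset.sum_congr rfl fun i _ => Finset.sum_comm
    have e4 : ∑ m, (if k = m then ∑ i, ∑ j, ∑ l, A i j k l * b i j k l else 0) * v m
        = ∑ i, ∑ j, ∑ l, A i j k l * b i j k l * v k := by
      simp only [ite_mul, zero_mul, Finset.sum_ite_eq, Finset.mem_univ, if_true]
      simp only [Finset.sum_mul]
    calc ∑ m, a k m * v m
        = ∑ m, ((-(∑ j, ∑ l, A m j k l * b m j k l) - (∑ i, ∑ l, A i m k l * b i m k l)
            + (∑ i, ∑ j, A i j k m * b i j k m)
            + (if k = m then ∑ i, ∑ j, ∑ l, A i j k l * b i j k l else 0)) * v m) :=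
          Finset.sum_congr rfl fun m _ => by rw [ha]
      _ = -(∑ m, (∑ j, ∑ l, A m j k l * b m j k l) * v m)
            - (∑ m, (∑ i, ∑ l, A i m k l * b i m k l) * v m)
            + (∑ m, (∑ i, ∑ j, A i j k m * b i j k m) * v m)
            + (∑ m, (if k = m then ∑ i, ∑ j, ∑ l, A i j k l * b i j k l else 0) * v m) := by
          simp only [add_mul, sub_mul, neg_mul, Finset.sum_add_distrib,
            Finset.sum_sub_distrib]
          simp
      _ = _ := by rw [e1, e2, e3, e4, expand]; ring
  have hmv : ∀ (y : Fin n → ℝ) (k : Fin n),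
      (Matrix.of a).mulVec y k = ∑ m, a k m * y m := by
    intro y k
    simp [Matrix.mulVec, dotProduct]
  have hquad : ∀ y : Fin n → ℝ, y ⬝ᵥ (Matrix.of a).mulVec y
      = ∑ x : Fin n × Fin n × Fin n × Fin n,
          A x.1 x.2.1 x.2.2.1 x.2.2.2 * b x.1 x.2.1 x.2.2.1 x.2.2.2
            * y x.2.2.1 * (y x.2.2.1 + y x.2.2.2 - y x.1 - y x.2.1) := by
    intro y
    calc y ⬝ᵥ (Matrix.of a).mulVec y = ∑ k, y k * ∑ m, a k m * y m := by
          simp only [dotProduct]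
          exact Finset.sum_congr rfl fun k _ => by rw [hmv]
      _ = ∑ k, ∑ i, ∑ j, ∑ l,
            A i j k l * b i j k l * y k * (y k + y l - y i - y j) := by
          refine Finset.sum_congr rfl fun k _ => ?_
          rw [key y k, mul_neg]
          simp only [Finset.mul_sum]
          rw [negsum3]
          exact Finset.sum_congr rfl fun i _ => Finset.sum_congr rfl fun j _ =>
            Finset.sum_congr rfl fun l _ => by ring
      _ = ∑ i, ∑ j, ∑ k, ∑ l,
            A i j k l * b i j k l * y k * (y k + y l - y i - y j) := by
          rw [Finset.sum_comm]
          exact Finset.sum_congr rfl fun i _ => Finset.sum_comm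
      _ = _ := sum4_eq' _
  -- abbreviations for the symmetrization step
  have hsymm4 : ∀ y : Fin n → ℝ,
      4 * (y ⬝ᵥ (Matrix.of a).mulVec y)
        = ∑ x : Fin n × Fin n × Fin n × Fin n,
            A x.1 x.2.1 x.2.2.1 x.2.2.2 * b x.1 x.2.1 x.2.2.1 x.2.2.2
              * (y x.1 + y x.2.1 - y x.2.2.1 - y x.2.2.2) ^ 2 := by
    intro y
    set g : Fin n × Fin n × Fin n × Fin n → ℝ := fun x =>
      A x.1 x.2.1 x.2.2.1 x.2.2.2 * b x.1 x.2.1 x.2.2.1 x.2.2.2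
        * y x.2.2.1 * (y x.2.2.1 + y x.2.2.2 - y x.1 - y x.2.1) with hg
    have s1 : Function.Involutive
        (fun x : Fin n × Fin n × Fin n × Fin n => (x.1, x.2.1, x.2.2.2, x.2.2.1)) :=
      fun x => rfl
    have s2 : Function.Involutive
        (fun x : Fin n × Fin n × Fin n × Fin n => (x.2.2.1, x.2.2.2, x.1, x.2.1)) :=
      fun x => rfl
    have sym1 : ∑ x : Fin n × Fin n × Fin n × Fin n,
        A x.1 x.2.1 x.2.2.1 x.2.2.2 * b x.1 x.2.1 x.2.2.1 x.2.2.2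
          * y x.2.2.2 * (y x.2.2.1 + y x.2.2.2 - y x.1 - y x.2.1)
        = ∑ x, g x := by
      rw [← sum_invol' _ s1 g]
      refine Finset.sum_congr rfl fun x _ => ?_
      obtain ⟨i, j, k, l⟩ := x
      show A i j k l * b i j k l * y l * (y k + y l - y i - y j)
        = A i j l k * b i j l k * y l * (y l + y k - y i - y j)
      rw [hS_kl i j k l]; ring
    have sym2 : ∑ x : Fin n × Fin n × Fin n × Fin n,
        A x.1 x.2.1 x.2.2.1 x.2.2.2 * b x.1 x.2.1 x.2.2.1 x.2.2.2
          * y x.1 * (y x.2.2.1 + y x.2.2.2 - y x.1 - y x.2.1)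
        = -∑ x, g x := by
      have h0 : ∑ x : Fin n × Fin n × Fin n × Fin n,
          -(A x.1 x.2.1 x.2.2.1 x.2.2.2 * b x.1 x.2.1 x.2.2.1 x.2.2.2
            * y x.1 * (y x.2.2.1 + y x.2.2.2 - y x.1 - y x.2.1))
          = ∑ x, g x := by
        rw [← sum_invol' _ s2 g]
        refine Finset.sum_congr rfl fun x _ => ?_
        obtain ⟨i, j, k, l⟩ := x
        show -(A i j k l * b i j k l * y i * (y k + y l - y i - y j))
          = A k l i j * b k l i j * y i * (y i + y j - y k - y l)
        rw [hS_swap i j k l]; ring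
      rw [← h0, Finset.sum_neg_distrib, neg_neg]
    have sym3 : ∑ x : Fin n × Fin n × Fin n × Fin n,
        A x.1 x.2.1 x.2.2.1 x.2.2.2 * b x.1 x.2.1 x.2.2.1 x.2.2.2
          * y x.2.1 * (y x.2.2.1 + y x.2.2.2 - y x.1 - y x.2.1)
        = -∑ x, g x := by
      have h0 : ∑ x : Fin n × Fin n × Fin n × Fin n,
          -(A x.1 x.2.1 x.2.2.1 x.2.2.2 * b x.1 x.2.1 x.2.2.1 x.2.2.2
            * y x.2.1 * (y x.2.2.1 + y x.2.2.2 - y x.1 - y x.2.1))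
          = ∑ x, g x := by
        have step : ∑ x : Fin n × Fin n × Fin n × Fin n,
            g ((fun x : Fin n × Fin n × Fin n × Fin n =>
              (x.1, x.2.1, x.2.2.2, x.2.2.1))
                ((fun x : Fin n × Fin n × Fin n × Fin n =>
              (x.2.2.1, x.2.2.2, x.1, x.2.1)) x)) = ∑ x, g x := by
          rw [sum_invol' _ s2 (fun x => g ((fun x : Fin n × Fin n × Fin n × Fin n =>
              (x.1, x.2.1, x.2.2.2, x.2.2.1)) x)), sum_invol' _ s1 g]
        rw [← step]
        refine Finset.sum_congr rfl fun x _ => ?_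
        obtain ⟨i, j, k, l⟩ := x
        show -(A i j k l * b i j k l * y j * (y k + y l - y i - y j))
          = A k l j i * b k l j i * y j * (y j + y i - y k - y l)
        rw [(hS_swap j i k l), (hS_ij i j k l)]; ring
      rw [← h0, Finset.sum_neg_distrib, neg_neg]
    have hsplit : ∑ x : Fin n × Fin n × Fin n × Fin n,
        A x.1 x.2.1 x.2.2.1 x.2.2.2 * b x.1 x.2.1 x.2.2.1 x.2.2.2
          * (y x.1 + y x.2.1 - y x.2.2.1 - y x.2.2.2) ^ 2
        = (∑ x, g x)
          + (∑ x : Fin n × Fin n × Fin n × Fin n,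
              A x.1 x.2.1 x.2.2.1 x.2.2.2 * b x.1 x.2.1 x.2.2.1 x.2.2.2
                * y x.2.2.2 * (y x.2.2.1 + y x.2.2.2 - y x.1 - y x.2.1))
          - (∑ x : Fin n × Fin n × Fin n × Fin n,
              A x.1 x.2.1 x.2.2.1 x.2.2.2 * b x.1 x.2.1 x.2.2.1 x.2.2.2
                * y x.1 * (y x.2.2.1 + y x.2.2.2 - y x.1 - y x.2.1))
          - (∑ x : Fin n × Fin n × Fin n × Fin n,
              A x.1 x.2.1 x.2.2.1 x.2.2.2 * b x.1 x.2.1 x.2.2.1 x.2.2.2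
                * y x.2.1 * (y x.2.2.1 + y x.2.2.2 - y x.1 - y x.2.1)) := by
      rw [← Finset.sum_add_distrib, ← Finset.sum_sub_distrib, ← Finset.sum_sub_distrib]
      exact Finset.sum_congr rfl fun x _ => by simp only [hg]; ring
    rw [hquad y, hsplit, sym1, sym2, sym3]
    ring
  have hSnn : ∀ i j k l, 0 ≤ A i j k l * b i j k l := fun i j k l =>
    mul_nonneg (hApos i j k l) (hbpos i j k l).le
  have hqnn : ∀ y : Fin n → ℝ, 0 ≤ y ⬝ᵥ (Matrix.of a).mulVec y := by
    intro y
    have h4 := hsymm4 y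
    have hnn : 0 ≤ ∑ x : Fin n × Fin n × Fin n × Fin n,
        A x.1 x.2.1 x.2.2.1 x.2.2.2 * b x.1 x.2.1 x.2.2.1 x.2.2.2
          * (y x.1 + y x.2.1 - y x.2.2.1 - y x.2.2.2) ^ 2 :=
      Finset.sum_nonneg fun x _ => mul_nonneg (hSnn _ _ _ _) (sq_nonneg _)
    linarith
  refine ⟨hbpos, ?_, ?_, ?_, ?_⟩
  · -- part (a)
    intro k
    rw [hQ, key (fun m => Real.log (f m)) k, neg_neg]
    refine Finset.sum_congr rfl fun i _ => Finset.sum_congr rfl fun j _ =>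
      Finset.sum_congr rfl fun l _ => ?_
    rw [hA1 k l i j, mul_assoc (A i j k l) (b i j k l), hbkey i j k l]
    ring
  · -- part (b)
    intro k m
    have t1 : ∑ j, ∑ l, A m j k l * b m j k l = ∑ j, ∑ l, A k j m l * b k j m l := by
      calc ∑ j, ∑ l, A m j k l * b m j k l
          = ∑ j, ∑ l, A k l m j * b k l m j :=
            Finset.sum_congr rfl fun j _ => Finset.sum_congr rfl fun l _ =>
              (hS_swap m j k l).symm
        _ = ∑ l, ∑ j, A k l m j * b k l m j := Finset.sum_comm
    have t2 : ∑ i, ∑ l, A i m k l * b i m k l = ∑ i, ∑ l, A i k m l * b i k m l := by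
      calc ∑ i, ∑ l, A i m k l * b i m k l
          = ∑ i, ∑ l, A l k m i * b l k m i :=
            Finset.sum_congr rfl fun i _ => Finset.sum_congr rfl fun l _ =>
              ((hS_kl l k i m).trans ((hS_ij k l i m).trans (hS_swap i m k l))).symm
        _ = ∑ l, ∑ i, A l k m i * b l k m i := Finset.sum_comm
    have t3 : ∑ i, ∑ j, A i j k m * b i j k m = ∑ i, ∑ j, A i j m k * b i j m k :=
      Finset.sum_congr rfl fun i _ => Finset.sum_congr rfl fun j _ =>
        (hS_kl i j m k)
    have t4 : (if k = m then ∑ i, ∑ j, ∑ l, A i j k l * b i j k l else 0)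
        = (if m = k then ∑ i, ∑ j, ∑ l, A i j m l * b i j m l else 0) := by
      by_cases h : k = m
      · subst h; rfl
      · rw [if_neg h, if_neg (Ne.symm h)]
    rw [ha k m, ha m k, t1, t2, t3, t4]
  · -- part (c)
    intro y
    constructor
    · rw [sum4_eq' (fun i j k l => A i j k l * b i j k l * (y i + y j - y k - y l) ^ 2)]
      have h4 := hsymm4 y
      linarith
    · exact hqnn y
  · -- part (d)
    intro y
    constructor
    · intro h0
      have hz : y ⬝ᵥ (Matrix.of a).mulVec y = 0 := by
        rw [h0, dotProduct_zero]
      have h4 := hsymm4 y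
      rw [hz, mul_zero] at h4
      have hall := (Finset.sum_eq_zero_iff_of_nonneg
        (fun x _ => mul_nonneg (hSnn x.1 x.2.1 x.2.2.1 x.2.2.2) (sq_nonneg
          (y x.1 + y x.2.1 - y x.2.2.1 - y x.2.2.2)))).mp h4.symm
      intro i j k l
      have hx := hall (i, j, k, l) (Finset.mem_univ _)
      simp only at hx
      rcases mul_eq_zero.mp hx with h | h
      · rcases mul_eq_zero.mp h with h | h
        · rw [h, zero_mul]
        · exact absurd h (hbpos i j k l).ne'
      · rw [pow_eq_zero_iff (two_ne_zero)] at h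
        rw [h, mul_zero]
    · intro h
      funext k
      show (Matrix.of a).mulVec y k = 0
      rw [hmv, key y k, neg_eq_zero]
      refine Finset.sum_eq_zero fun i _ => Finset.sum_eq_zero fun j _ =>
        Finset.sum_eq_zero fun l _ => ?_
      calc A i j k l * b i j k l * (y i + y j - y k - y l)
          = b i j k l * (A i j k l * (y i + y j - y k - y l)) := by ring
        _ = 0 := by rw [h i j k l, mul_zero]
end
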